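/- Let P be a finite set, let s ≥ 2 be an integer, and for each j ∈ {2,…,s} and each i' ∈ [s] let S^j_{i'} ⊆ P be a finite set such that, for each fixed j, the sets S^j_1,…,S^j_s are pairwise disjoint. Let f^j_{i'} be nonnegative integers with f^j_{i'} ≤ |S^j_{i'}| for all j, i', and let γ_2,…,γ_s ≥ 0 be reals with Σ_{j=2}^s γ_j ≤ 1. Set S_{i'} := ∪_{j=2}^s S^j_{i'}. Then there exist pairwise disjoint subsets T_{i'} ⊆ S_{i'}, for i' = 1,…,s, such that |T_{i'}| = ⌊Σ_{j=2}^s γ_j f^j_{i'}⌋ for every i' ∈ [s]. -/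

import Mathlib

open Finset

/-- Hall-type matching lemma: there exist pairwise disjoint subsets
`T i' ⊆ S i' = ∪_{j=2}^s S j i'` with `|T i'| = ⌊∑_{j=2}^s γ j * f j i'⌋`. -/
theorem disjoint_subsets_of_floor_sizes
    (P : Type*) [Fintype P] [DecidableEq P] (s : ℕ) (hs : 2 ≤ s)
    (S : ℕ → Fin s → Finset P)
    (hdisj : ∀ j ∈ Finset.Icc 2 s, ∀ i i' : Fin s, i ≠ i' → Disjoint (S j i) (S j i'))
    (f : ℕ → Fin s → ℕ)
    (hf : ∀ j ∈ Finset.Icc 2 s, ∀ i' : Fin s, f j i' ≤ (S j i').card)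
    (γ : ℕ → ℝ)
    (hγ : ∀ j ∈ Finset.Icc 2 s, 0 ≤ γ j)
    (hγsum : ∑ j ∈ Finset.Icc 2 s, γ j ≤ 1) :
    ∃ T : Fin s → Finset P,
      (∀ i i' : Fin s, i ≠ i' → Disjoint (T i) (T i')) ∧
      (∀ i' : Fin s, T i' ⊆ (Finset.Icc 2 s).biUnion (fun j => S j i')) ∧
      (∀ i' : Fin s, ((T i').card : ℤ) = ⌊∑ j ∈ Finset.Icc 2 s, γ j * (f j i' : ℝ)⌋) := by
  classical
  set U : Fin s → Finset P := fun i' => (Finset.Icc 2 s).biUnion (fun j => S j i') with hU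
  set n : Fin s → ℕ := fun i' => (⌊∑ j ∈ Finset.Icc 2 s, γ j * (f j i' : ℝ)⌋).toNat with hn
  have hsum_nonneg : ∀ i' : Fin s, 0 ≤ ∑ j ∈ Finset.Icc 2 s, γ j * (f j i' : ℝ) := by
    intro i'
    exact Finset.sum_nonneg fun j hj => mul_nonneg (hγ j hj) (Nat.cast_nonneg _)
  have hncast : ∀ i' : Fin s, (n i' : ℝ) ≤ ∑ j ∈ Finset.Icc 2 s, γ j * (f j i' : ℝ) := by
    intro i'
    have h0 : (0 : ℤ) ≤ ⌊∑ j ∈ Finset.Icc 2 s, γ j * (f j i' : ℝ)⌋ :=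
      Int.floor_nonneg.mpr (hsum_nonneg i')
    have : ((n i' : ℤ) : ℝ) ≤ ∑ j ∈ Finset.Icc 2 s, γ j * (f j i' : ℝ) := by
      rw [hn, Int.toNat_of_nonneg h0]
      exact Int.floor_le _
    exact_mod_cast this
  -- key inequality
  have key : ∀ B : Finset (Fin s), ∑ i' ∈ B, n i' ≤ (B.biUnion U).card := by
    intro B
    have hreal : ((∑ i' ∈ B, n i' : ℕ) : ℝ) ≤ ((B.biUnion U).card : ℝ) := by
      push_cast
      calc ∑ i' ∈ B, (n i' : ℝ)
          ≤ ∑ i' ∈ B, ∑ j ∈ Finset.Icc 2 s, γ j * (f j i' : ℝ) :=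
            Finset.sum_le_sum fun i' _ => hncast i'
        _ = ∑ j ∈ Finset.Icc 2 s, γ j * ∑ i' ∈ B, (f j i' : ℝ) := by
            rw [Finset.sum_comm]
            exact Finset.sum_congr rfl fun j _ => (Finset.mul_sum _ _ _).symm
        _ ≤ ∑ j ∈ Finset.Icc 2 s, γ j * ((B.biUnion U).card : ℝ) := by
            apply Finset.sum_le_sum
            intro j hj
            apply mul_le_mul_of_nonneg_left _ (hγ j hj)
            have h1 : ∑ i' ∈ B, (f j i' : ℝ) ≤ ∑ i' ∈ B, ((S j i').card : ℝ) := by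
              apply Finset.sum_le_sum
              intro i' _
              exact_mod_cast hf j hj i'
            have h2 : ∑ i' ∈ B, (S j i').card = (B.biUnion (S j)).card :=
              (Finset.card_biUnion fun i _ i' _ h => hdisj j hj i i' h).symm
            have h3 : (B.biUnion (S j)).card ≤ (B.biUnion U).card := by
              apply Finset.card_le_card
              apply Finset.biUnion_subset.mpr
              intro i' hi'
              exact (Finset.subset_biUnion_of_mem (fun j => S j i') hj).trans
                (Finset.subset_biUnion_of_mem U hi')
            calc ∑ i' ∈ B, (f j i' : ℝ) ≤ ∑ i' ∈ B, ((S j i').card : ℝ) := h1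
              _ = ((B.biUnion (S j)).card : ℝ) := by exact_mod_cast h2
              _ ≤ ((B.biUnion U).card : ℝ) := by exact_mod_cast h3
        _ = (∑ j ∈ Finset.Icc 2 s, γ j) * ((B.biUnion U).card : ℝ) :=
            (Finset.sum_mul _ _ _).symm
        _ ≤ 1 * ((B.biUnion U).card : ℝ) :=
            mul_le_mul_of_nonneg_right hγsum (Nat.cast_nonneg _)
        _ = _ := one_mul _
    exact_mod_cast hreal
  -- Hall's theorem on the index type Σ i', Fin (n i')
  set ι := (i' : Fin s) × Fin (n i') with hι
  have hall : ∀ A : Finset ι, A.card ≤ (A.biUnion (fun x => U x.1)).card := by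
    intro A
    set B := A.image Sigma.fst with hB
    have hAsub : A ⊆ B.sigma (fun i' => (Finset.univ : Finset (Fin (n i')))) := by
      rintro ⟨a, b⟩ hx
      rw [Finset.mem_sigma]
      exact ⟨Finset.mem_image_of_mem _ hx, Finset.mem_univ _⟩
    have h1 : A.card ≤ ∑ i' ∈ B, n i' := by
      calc A.card ≤ (B.sigma fun i' => (Finset.univ : Finset (Fin (n i')))).card :=
            Finset.card_le_card hAsub
        _ = ∑ i' ∈ B, n i' := by simp [Finset.card_sigma]
    have h2 : A.biUnion (fun x => U x.1) = B.biUnion U := by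
      rw [hB, Finset.image_biUnion]
    calc A.card ≤ ∑ i' ∈ B, n i' := h1
      _ ≤ (B.biUnion U).card := key B
      _ = (A.biUnion (fun x => U x.1)).card := by rw [h2]
  obtain ⟨g, hginj, hgmem⟩ :=
    (Finset.all_card_le_biUnion_card_iff_exists_injective (fun x : ι => U x.1)).mp hall
  refine ⟨fun i' => (Finset.univ : Finset (Fin (n i'))).image (fun k => g ⟨i', k⟩), ?_, ?_, ?_⟩
  · intro i i' hne
    simp only [Finset.disjoint_left, Finset.mem_image]
    rintro a ⟨k, -, rfl⟩ ⟨k', -, hk'⟩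
    exact hne (congrArg Sigma.fst (hginj hk'.symm))
  · intro i'
    intro a ha
    simp only [Finset.mem_image] at ha
    obtain ⟨k, -, rfl⟩ := ha
    exact hgmem ⟨i', k⟩
  · intro i'
    have hcard : ((Finset.univ : Finset (Fin (n i'))).image (fun k => g ⟨i', k⟩)).card = n i' := by
      rw [Finset.card_image_of_injective _ (fun k k' h => by
        have := hginj h
        exact (Sigma.mk.inj_iff.mp this).2.eq)]
      simp
    rw [hcard, hn]
    exact (Int.toNat_of_nonneg (Int.floor_nonneg.mpr (hsum_nonneg i')))
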